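/- Any triangle-free graph on n ≥ 2 vertices with minimum degree at least d contains a bipartite induced subgraph of minimum degree at least d²/(2n). -/

import Mathlib

/-- A set of vertices is stable (independent) if no two of its vertices are adjacent. -/
def SimpleGraph.IsStableSet {V : Type*} (G : SimpleGraph V) (s : Set V) : Prop :=
  ∀ u ∈ s, ∀ v ∈ s, ¬ G.Adj u v

/-- The fractional chromatic number of a finite graph: the infimum of `a / b` over proper
`(a,b)`-colourings, i.e. assignments of `b`-element subsets of `{1,…,a}` to the vertices such
that adjacent vertices receive disjoint subsets. -/
noncomputable def SimpleGraph.fracChi {V : Type*} [Fintype V] (G : SimpleGraph V) : ℝ :=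
  sInf { x : ℝ | ∃ a b : ℕ, 0 < b ∧
    (∃ c : V → Finset (Fin a), (∀ v, (c v).card = b) ∧
      ∀ u v, G.Adj u v → Disjoint (c u) (c v)) ∧ x = (a : ℝ) / b }

open Finset

private lemma step_lt {X Y Z c : ℕ} (h1 : X + c ≤ Y + Z) (h2 : Z < c) : X < Y := by omega

lemma prune {V : Type*} [Fintype V] [DecidableEq V] (G : SimpleGraph V) [DecidableRel G.Adj]
    (c s : ℕ) :
    ∀ m : ℕ, ∀ A B : Finset V, A.card + B.card ≤ m →
    (A ∪ B).Nonempty →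
    (A.card + B.card) * c ≤ s * (∑ a ∈ A, (B.filter (G.Adj a)).card) →
    ∃ A' B' : Finset V, A' ⊆ A ∧ B' ⊆ B ∧ (A' ∪ B').Nonempty ∧
      (∀ v ∈ A', c ≤ s * ((B'.filter (G.Adj v)).card)) ∧
      (∀ v ∈ B', c ≤ s * ((A'.filter (G.Adj v)).card)) := by
  intro m
  induction m with
  | zero =>
    intro A B hm hne _
    rw [Nat.le_zero, Nat.add_eq_zero] at hm
    rw [Finset.card_eq_zero.1 hm.1, Finset.card_eq_zero.1 hm.2] at hne
    simp at hne
  | succ m ih =>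
    intro A B hm hne hineq
    by_cases hA : ∀ v ∈ A, c ≤ s * (B.filter (G.Adj v)).card
    · by_cases hB : ∀ v ∈ B, c ≤ s * (A.filter (G.Adj v)).card
      · exact ⟨A, B, subset_rfl, subset_rfl, hne, hA, hB⟩
      · push_neg at hB
        obtain ⟨v, hvB, hbad⟩ := hB
        have hsplit : ∀ a : V, (B.filter (G.Adj a)).card
            = ((B.erase v).filter (G.Adj a)).card + (if G.Adj a v then 1 else 0) := by
          intro a
          rw [Finset.filter_erase]
          by_cases hav : G.Adj a v
          · rw [if_pos hav, Finset.card_erase_of_mem (Finset.mem_filter.2 ⟨hvB, hav⟩)]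
            have : 0 < (B.filter (G.Adj a)).card :=
              Finset.card_pos.2 ⟨v, Finset.mem_filter.2 ⟨hvB, hav⟩⟩
            omega
          · rw [if_neg hav, Finset.erase_eq_of_notMem (by simp [hav]), Nat.add_zero]
        have hes : ∑ a ∈ A, (B.filter (G.Adj a)).card
            = (∑ a ∈ A, ((B.erase v).filter (G.Adj a)).card)
              + (A.filter (G.Adj v)).card := by
          have hfc : (A.filter (fun a => G.Adj a v)) = A.filter (G.Adj v) := by
            apply Finset.filter_congr
            intro a _
            simp [SimpleGraph.adj_comm]
          rw [← hfc, Finset.card_filter, ← Finset.sum_add_distrib]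
          exact Finset.sum_congr rfl fun a _ => hsplit a
        have hkey : (A.card + (B.erase v).card) * c
            < s * (∑ a ∈ A, ((B.erase v).filter (G.Adj a)).card) := by
          refine step_lt ?_ hbad
          have h2 : (B.erase v).card = B.card - 1 := Finset.card_erase_of_mem hvB
          have h3 : 0 < B.card := Finset.card_pos.2 ⟨v, hvB⟩
          calc (A.card + (B.erase v).card) * c + c
              = (A.card + B.card) * c := by
                have h5 : A.card + B.card = (A.card + (B.erase v).card) + 1 := by omega
                rw [h5]; ring
            _ ≤ s * (∑ a ∈ A, ((B.erase v).filter (G.Adj a)).card)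
                + s * (A.filter (G.Adj v)).card := by
                rw [← Nat.mul_add, ← hes]; exact hineq
        have hne' : (A ∪ B.erase v).Nonempty := by
          rcases Finset.eq_empty_or_nonempty A with hAe | hAne
          · exfalso
            rw [hAe] at hkey
            simp at hkey
          · exact hAne.mono Finset.subset_union_left
        have hm' : A.card + (B.erase v).card ≤ m := by
          have := Finset.card_erase_of_mem hvB
          have h3 : 0 < B.card := Finset.card_pos.2 ⟨v, hvB⟩
          omega
        obtain ⟨A', B', h1, h2, h3, h4, h5⟩ := ih A (B.erase v) hm' hne' (le_of_lt hkey)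
        exact ⟨A', B', h1, h2.trans (Finset.erase_subset _ _), h3, h4, h5⟩
    · push_neg at hA
      obtain ⟨v, hvA, hbad⟩ := hA
      have hes : ∑ a ∈ A, (B.filter (G.Adj a)).card
          = (∑ a ∈ A.erase v, (B.filter (G.Adj a)).card) + (B.filter (G.Adj v)).card :=
        (Finset.sum_erase_add A _ hvA).symm
      have hkey : ((A.erase v).card + B.card) * c
          < s * (∑ a ∈ A.erase v, (B.filter (G.Adj a)).card) := by
        refine step_lt ?_ hbad
        have h2 : (A.erase v).card = A.card - 1 := Finset.card_erase_of_mem hvA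
        have h3 : 0 < A.card := Finset.card_pos.2 ⟨v, hvA⟩
        calc ((A.erase v).card + B.card) * c + c
            = (A.card + B.card) * c := by
              have h5 : A.card + B.card = ((A.erase v).card + B.card) + 1 := by omega
              rw [h5]; ring
          _ ≤ s * (∑ a ∈ A.erase v, (B.filter (G.Adj a)).card)
              + s * (B.filter (G.Adj v)).card := by
              rw [← Nat.mul_add, ← hes]; exact hineq
      have hne' : (A.erase v ∪ B).Nonempty := by
        rcases Finset.eq_empty_or_nonempty (A.erase v) with hAe | hAne
        · exfalso
          rw [hAe] at hkey
          simp at hkey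
        · exact hAne.mono Finset.subset_union_left
      have hm' : (A.erase v).card + B.card ≤ m := by
        have := Finset.card_erase_of_mem hvA
        have h3 : 0 < A.card := Finset.card_pos.2 ⟨v, hvA⟩
        omega
      obtain ⟨A', B', h1, h2, h3, h4, h5⟩ := ih (A.erase v) B hm' hne' (le_of_lt hkey)
      exact ⟨A', B', h1.trans (Finset.erase_subset _ _), h2, h3, h4, h5⟩

lemma avg {V : Type*} [Fintype V] [DecidableEq V] (G : SimpleGraph V) [DecidableRel G.Adj]
    (d : ℕ) (hV : Nonempty V) (hmin : ∀ v, d ≤ G.degree v) :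
    ∃ u w : V, (G.degree u + G.degree w) * d ^ 2 ≤
      (2 * Fintype.card V) *
        ∑ a ∈ G.neighborFinset u, ((G.neighborFinset w).filter (G.Adj a)).card := by
  set n := Fintype.card V
  have hmain : ∑ p ∈ (univ ×ˢ univ : Finset (V × V)), (G.degree p.1 + G.degree p.2) * d ^ 2
      ≤ ∑ p ∈ (univ ×ˢ univ : Finset (V × V)), (2 * n) *
        ∑ a ∈ G.neighborFinset p.1, ((G.neighborFinset p.2).filter (G.Adj a)).card := by
    rw [Finset.sum_product, Finset.sum_product]
    -- inner sum over w for fixed a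
    have hw : ∀ a : V, ∑ w : V, ((G.neighborFinset w).filter (G.Adj a)).card
        = ∑ b ∈ G.neighborFinset a, G.degree b := by
      intro a
      have h1 : ∀ w : V, (G.neighborFinset w).filter (G.Adj a)
          = (G.neighborFinset a).filter (G.Adj w) := by
        intro w
        ext b
        simp only [Finset.mem_filter, SimpleGraph.mem_neighborFinset]
        tauto
      calc ∑ w : V, ((G.neighborFinset w).filter (G.Adj a)).card
          = ∑ w : V, ((G.neighborFinset a).filter (G.Adj w)).card := by
            exact Finset.sum_congr rfl fun w _ => by rw [h1]
        _ = ∑ w : V, ∑ b ∈ G.neighborFinset a, (if G.Adj w b then 1 else 0) := by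
            exact Finset.sum_congr rfl fun w _ => Finset.card_filter _ _
        _ = ∑ b ∈ G.neighborFinset a, ∑ w : V, (if G.Adj w b then 1 else 0) :=
            Finset.sum_comm
        _ = ∑ b ∈ G.neighborFinset a, G.degree b := by
            refine Finset.sum_congr rfl fun b _ => ?_
            rw [← Finset.card_filter]
            rw [← SimpleGraph.card_neighborFinset_eq_degree]
            congr 1
            rw [SimpleGraph.neighborFinset_eq_filter]
            apply Finset.filter_congr
            intro x _
            simp [SimpleGraph.adj_comm]
    -- lower bound the RHS
    have hRHS : ∀ u : V, (2 * n) * (G.degree u * d ^ 2)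
        ≤ ∑ w : V, (2 * n) *
          ∑ a ∈ G.neighborFinset u, ((G.neighborFinset w).filter (G.Adj a)).card := by
      intro u
      rw [← Finset.mul_sum, Finset.sum_comm]
      have : ∑ a ∈ G.neighborFinset u, ∑ w : V,
          ((G.neighborFinset w).filter (G.Adj a)).card ≥ G.degree u * d ^ 2 := by
        calc ∑ a ∈ G.neighborFinset u, ∑ w : V, ((G.neighborFinset w).filter (G.Adj a)).card
            = ∑ a ∈ G.neighborFinset u, ∑ b ∈ G.neighborFinset a, G.degree b := by
              exact Finset.sum_congr rfl fun a _ => hw a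
          _ ≥ ∑ a ∈ G.neighborFinset u, ∑ b ∈ G.neighborFinset a, d := by
              refine Finset.sum_le_sum fun a _ => Finset.sum_le_sum fun b _ => hmin b
          _ = ∑ a ∈ G.neighborFinset u, G.degree a * d := by
              refine Finset.sum_congr rfl fun a _ => ?_
              rw [Finset.sum_const, smul_eq_mul, SimpleGraph.card_neighborFinset_eq_degree]
          _ ≥ ∑ a ∈ G.neighborFinset u, d * d := by
              refine Finset.sum_le_sum fun a _ => Nat.mul_le_mul_right _ (hmin a)
          _ = G.degree u * d ^ 2 := by
              rw [Finset.sum_const, smul_eq_mul, SimpleGraph.card_neighborFinset_eq_degree,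
                pow_two]
      exact Nat.mul_le_mul_left _ this
    -- LHS computation
    have hLHS : ∀ u : V, ∑ w : V, (G.degree u + G.degree w) * d ^ 2
        = n * (G.degree u * d ^ 2) + (∑ w : V, G.degree w) * d ^ 2 := by
      intro u
      rw [← Finset.sum_mul, Finset.sum_add_distrib, Finset.sum_const, Finset.card_univ,
        smul_eq_mul, Nat.add_mul]
      ring
    calc ∑ u : V, ∑ w : V, (G.degree u + G.degree w) * d ^ 2
        = ∑ u : V, (n * (G.degree u * d ^ 2) + (∑ w : V, G.degree w) * d ^ 2) :=
          Finset.sum_congr rfl fun u _ => hLHS u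
      _ = n * ((∑ u : V, G.degree u) * d ^ 2) + n * ((∑ w : V, G.degree w) * d ^ 2) := by
          rw [Finset.sum_add_distrib, Finset.sum_const, Finset.card_univ, smul_eq_mul,
            ← Finset.mul_sum, ← Finset.sum_mul, show Fintype.card V = n from rfl]
      _ = ∑ u : V, (2 * n) * (G.degree u * d ^ 2) := by
          rw [← Finset.mul_sum]
          have : ∑ u : V, G.degree u * d ^ 2 = (∑ u : V, G.degree u) * d ^ 2 :=
            (Finset.sum_mul _ _ _).symm
          rw [this]; ring
      _ ≤ _ := Finset.sum_le_sum fun u _ => hRHS u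
  obtain ⟨p, -, hp⟩ := Finset.exists_le_of_sum_le
    (Finset.univ_nonempty (α := V × V) |>.mono (by simp) |>.mono subset_rfl) hmain
  exact ⟨p.1, p.2, hp⟩

/-- Any triangle-free graph on `n ≥ 2` vertices with minimum degree at least `d` contains a
bipartite induced subgraph (the disjoint union of two stable sets `A` and `B`) of minimum
degree at least `d² / (2n)`. -/
theorem exists_bipartite_induced_min_degree {V : Type*} [Fintype V] [DecidableEq V]
    (G : SimpleGraph V) [DecidableRel G.Adj] (n d : ℕ)
    (hn : Fintype.card V = n) (hn2 : 2 ≤ n)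
    (htf : G.CliqueFree 3) (hmin : ∀ v, d ≤ G.degree v) :
    ∃ A B : Finset V, Disjoint A B ∧ G.IsStableSet ↑A ∧ G.IsStableSet ↑B ∧
      (A ∪ B).Nonempty ∧
      ∀ v ∈ A ∪ B, (d : ℝ) ^ 2 / (2 * n) ≤ (((A ∪ B).filter (G.Adj v)).card : ℝ) := by
  have hV : Nonempty V := by
    rw [← Fintype.card_pos_iff]; omega
  have hstab : ∀ (x : V) (S : Finset V), S ⊆ G.neighborFinset x →
      G.IsStableSet (S : Set V) := by
    intro x S hS a ha b hb hadj
    have ha' : G.Adj x a := by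
      have := hS (Finset.mem_coe.1 ha)
      rwa [SimpleGraph.mem_neighborFinset] at this
    have hb' : G.Adj x b := by
      have := hS (Finset.mem_coe.1 hb)
      rwa [SimpleGraph.mem_neighborFinset] at this
    exact htf {x, a, b} (SimpleGraph.is3Clique_triple_iff.2 ⟨ha', hb', hadj⟩)
  rcases Nat.eq_zero_or_pos d with hd | hd
  · -- d = 0 case
    obtain ⟨v₀⟩ := hV
    refine ⟨{v₀}, ∅, by simp, ?_, ?_, by simp, ?_⟩
    · intro a ha b hb hadj
      simp only [Finset.coe_singleton, Set.mem_singleton_iff] at ha hb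
      subst ha; subst hb
      exact G.loopless.irrefl _ hadj
    · intro a ha
      simp at ha
    · intro v _
      subst hd
      simp only [Nat.cast_zero]
      rw [zero_pow (by norm_num), zero_div]
      positivity
  · -- d ≥ 1 case
    obtain ⟨u, w, huw⟩ := avg G d hV hmin
    set A₀ := G.neighborFinset u with hA₀
    set B₀ := G.neighborFinset w \ G.neighborFinset u with hB₀
    have hfeq : ∀ a ∈ A₀, (B₀.filter (G.Adj a))
        = ((G.neighborFinset w).filter (G.Adj a)) := by
      intro a ha
      rw [hA₀, SimpleGraph.mem_neighborFinset] at ha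
      ext b
      simp only [hB₀, Finset.mem_filter, Finset.mem_sdiff, SimpleGraph.mem_neighborFinset]
      constructor
      · rintro ⟨⟨h1, _⟩, h3⟩
        exact ⟨h1, h3⟩
      · rintro ⟨h1, h3⟩
        refine ⟨⟨h1, fun hub => ?_⟩, h3⟩
        exact htf {u, a, b} (SimpleGraph.is3Clique_triple_iff.2 ⟨ha, hub, h3⟩)
    have hinit : (A₀.card + B₀.card) * d ^ 2
        ≤ (2 * n) * ∑ a ∈ A₀, (B₀.filter (G.Adj a)).card := by
      have hsum : ∑ a ∈ A₀, (B₀.filter (G.Adj a)).card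
          = ∑ a ∈ A₀, ((G.neighborFinset w).filter (G.Adj a)).card :=
        Finset.sum_congr rfl fun a ha => by rw [hfeq a ha]
      rw [hsum]
      calc (A₀.card + B₀.card) * d ^ 2
          ≤ (G.degree u + G.degree w) * d ^ 2 := by
            apply Nat.mul_le_mul_right
            have h1 : A₀.card = G.degree u := G.card_neighborFinset_eq_degree u
            have h2 : B₀.card ≤ G.degree w := by
              rw [← G.card_neighborFinset_eq_degree w]
              exact Finset.card_le_card Finset.sdiff_subset
            omega
        _ ≤ _ := by rw [hn] at huw; exact huw
    have hne₀ : (A₀ ∪ B₀).Nonempty := by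
      have h1 : A₀.card = G.degree u := G.card_neighborFinset_eq_degree u
      have h2 : 0 < A₀.card := by
        have := hmin u; omega
      exact (Finset.card_pos.1 h2).mono Finset.subset_union_left
    obtain ⟨A', B', hsubA, hsubB, hne', hdegA, hdegB⟩ :=
      prune G (d ^ 2) (2 * n) (A₀.card + B₀.card) A₀ B₀ le_rfl hne₀ hinit
    have hdisj : Disjoint A' B' := by
      apply Finset.disjoint_left.2
      intro a haA haB
      have h1 := hsubA haA
      have h2 := hsubB haB
      rw [hB₀, Finset.mem_sdiff] at h2
      exact h2.2 h1
    have hstabA : G.IsStableSet (A' : Set V) := hstab u A' hsubA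
    have hstabB : G.IsStableSet (B' : Set V) :=
      hstab w B' (hsubB.trans Finset.sdiff_subset)
    refine ⟨A', B', hdisj, hstabA, hstabB, hne', ?_⟩
    intro v hv
    have hpos : (0 : ℝ) < 2 * (n : ℝ) := by
      have : (0:ℝ) < (n:ℝ) := by exact_mod_cast (by omega : 0 < n)
      linarith
    rw [Finset.mem_union] at hv
    have hkey : ∀ C D : Finset V, v ∈ C → G.IsStableSet (C : Set V) →
        d ^ 2 ≤ 2 * n * (D.filter (G.Adj v)).card →
        (d : ℝ) ^ 2 / (2 * n) ≤ (((C ∪ D).filter (G.Adj v)).card : ℝ) := by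
      intro C D hvC hCstab hnat
      have hempty : C.filter (G.Adj v) = ∅ := by
        rw [Finset.filter_eq_empty_iff]
        intro a ha
        exact hCstab v (Finset.mem_coe.2 hvC) a (Finset.mem_coe.2 ha)
      rw [Finset.filter_union, hempty, Finset.empty_union, div_le_iff₀ hpos]
      calc ((d : ℝ)) ^ 2 = ((d ^ 2 : ℕ) : ℝ) := by push_cast; ring
        _ ≤ ((2 * n * (D.filter (G.Adj v)).card : ℕ) : ℝ) := Nat.cast_le.2 hnat
        _ = ((D.filter (G.Adj v)).card : ℝ) * (2 * n) := by push_cast; ring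
    rcases hv with hvA | hvB
    · exact hkey A' B' hvA hstabA (hdegA v hvA)
    · have := hkey B' A' hvB hstabB (hdegB v hvB)
      rwa [Finset.union_comm] at this
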